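/- Let i ≥ 2 be a router and t ≥ 0 a time, for an instance all of whose packets have length 1 or 2. If Δ_i(t+1) = Δ_i(t) + 1 > Δ_{i−1}(t) ≥ 0, then at time t there exist at least Δ_i(t+1) − Δ_{i−1}(t) packets p that still need to be forwarded by router i−1 under the schedule Opt and whose current priority satisfies π(p,t) ≥ Δ_i(t+1) + 1. -/

import Mathlib

/-!
# Packet forwarding on a line network

There are `k` active routers `1, …, k`; router `i` forwards packets to router `i+1`.
An instance is a finite collection of packets; packet `p` has a release time `rel p : ℕ`,
a start router `start p ∈ {1, …, k}` and a length `len p ≥ 1` with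
`start p + len p − 1 ≤ k`; `p` must be forwarded by routers
`start p, start p + 1, …, start p + len p − 1` in this order.
-/

/-- An instance of online packet forwarding on a line network with `k` active routers.
Packets are indexed by `Fin n`. -/
structure PInstance (k : ℕ) where
  n : ℕ
  rel : Fin n → ℕ
  start : Fin n → ℕ
  len : Fin n → ℕ

namespace PInstance

variable {k : ℕ}

/-- The instance is well-formed: start routers are at least `1`, lengths are at least `1`,
and every packet fits on the line: `start p + len p − 1 ≤ k`. -/
def Valid (I : PInstance k) : Prop :=
  ∀ p, 1 ≤ I.start p ∧ 1 ≤ I.len p ∧ I.start p + I.len p ≤ k + 1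

/-- All packets of the instance have length `1` or `2`. -/
def Short (I : PInstance k) : Prop :=
  ∀ p, I.len p = 1 ∨ I.len p = 2

/-- A schedule assigns to each packet `p` and each hop index `j < len p` (corresponding to
router `start p + j`) the time step at which that router forwards `p`.  Values at
hop indices `j ≥ len p` are irrelevant. -/
abbrev Sched (I : PInstance k) := Fin I.n → ℕ → ℕ

/-- `arr I S p j` is the time from which hop `j` of packet `p` is available:
packet `p` is available at its start router from time `rel p`, and a packet forwarded
at time `t` is available at the next router from time `t + 1`. -/
def arr (I : PInstance k) (S : Sched I) (p : Fin I.n) : ℕ → ℕ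
  | 0 => I.rel p
  | j + 1 => S p j + 1

/-- Feasibility of a schedule: every hop is forwarded no earlier than the time from which
it is available (this includes releases and the order of the hops), and each router
forwards at most one packet in each time step. -/
def Feasible (I : PInstance k) (S : Sched I) : Prop :=
  (∀ p j, j < I.len p → arr I S p j ≤ S p j) ∧
  (∀ p q jp jq, jp < I.len p → jq < I.len q →
    I.start p + jp = I.start q + jq → S p jp = S q jq → p = q)

/-- Completion time `C(p)`: one plus the time step in which the last router forwards `p`. -/
def comp (I : PInstance k) (S : Sched I) (p : Fin I.n) : ℕ :=
  S p (I.len p - 1) + 1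

/-- Flow time of packet `p`: `C(p) − r(p)`. -/
def flowTime (I : PInstance k) (S : Sched I) (p : Fin I.n) : ℕ :=
  comp I S p - I.rel p

/-- Cost of a schedule: the maximum flow time over all packets of the instance. -/
def cost (I : PInstance k) (S : Sched I) : ℕ :=
  Finset.univ.sup (flowTime I S)

/-- `Opt(I)`: the minimum cost over all feasible schedules. -/
noncomputable def opt (I : PInstance k) : ℕ :=
  sInf {c | ∃ S : Sched I, Feasible I S ∧ cost I S = c}

/-- Hop `j` of packet `p` is waiting (available but not yet forwarded) at time `t`. -/
def Waiting (I : PInstance k) (S : Sched I) (p : Fin I.n) (j t : ℕ) : Prop :=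
  j < I.len p ∧ arr I S p j ≤ t ∧ t ≤ S p j

/-- Remaining length `ℓ(p,t)`: the number of routers that still need to forward `p`
at time `t` (under schedule `S`). -/
noncomputable def remLen (I : PInstance k) (S : Sched I) (p : Fin I.n) (t : ℕ) : ℕ :=
  Set.ncard {j : ℕ | j < I.len p ∧ t ≤ S p j}

/-- Priority `π(p,t) = (t − r(p)) + ℓ(p,t)`. -/
noncomputable def prio (I : PInstance k) (S : Sched I) (p : Fin I.n) (t : ℕ) : ℕ :=
  (t - I.rel p) + remLen I S p t

/-- A schedule is zealous if, at every time step and every router at which some packet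
is available (waiting), it forwards a packet there. -/
def Zealous (I : PInstance k) (S : Sched I) : Prop :=
  ∀ t i, (∃ p j, Waiting I S p j t ∧ I.start p + j = i) →
    ∃ q jq, Waiting I S q jq t ∧ I.start q + jq = i ∧ S q jq = t

/-- `S` is a schedule that Greedy (with some tie-breaking rule) produces: it is feasible,
and in every time step, every router at which at least one packet is waiting forwards a
waiting packet of maximum priority among the packets waiting there. -/
def IsGreedy (I : PInstance k) (S : Sched I) : Prop :=
  Feasible I S ∧
  ∀ t i, (∃ p j, Waiting I S p j t ∧ I.start p + j = i) →
    ∃ q jq, Waiting I S q jq t ∧ I.start q + jq = i ∧ S q jq = t ∧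
      ∀ p j, Waiting I S p j t → I.start p + j = i → prio I S p t ≤ prio I S q t

/-- The number of packets released by time `t` that still need to be forwarded by
router `i` at time `t` under schedule `S`. -/
noncomputable def needs (I : PInstance k) (S : Sched I) (i t : ℕ) : ℕ :=
  Set.ncard {p : Fin I.n | I.rel p ≤ t ∧ ∃ j, j < I.len p ∧ I.start p + j = i ∧ t ≤ S p j}

end PInstance

/-- `Δ_i(t) = g_i(t) − a_i(t)`, where `g_i(t)` counts the packets (released by time `t`)
that Greedy's schedule `Sg` still needs to forward on router `i` at time `t`, and
`a_i(t)` is the analogous quantity for the schedule `So` of `Opt`. -/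
noncomputable def delta {k : ℕ} (I : PInstance k) (Sg So : PInstance.Sched I)
    (i t : ℕ) : ℤ :=
  (I.needs Sg i t : ℤ) - (I.needs So i t : ℤ)


section Aux

open PInstance

variable {k : ℕ} {I : PInstance k}

/-- The set of packets pending at router `r` at time `t` under schedule `S`. -/
def Pend (I : PInstance k) (S : PInstance.Sched I) (r t : ℕ) : Set (Fin I.n) :=
  {p | I.rel p ≤ t ∧ ∃ j, j < I.len p ∧ I.start p + j = r ∧ t ≤ S p j}

lemma needs_eq_ncard_pend (S : PInstance.Sched I) (r t : ℕ) :
    I.needs S r t = (Pend I S r t).ncard := rfl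

/-- Release time is a lower bound for every hop's forwarding time. -/
lemma rel_le_sched {S : PInstance.Sched I} (hF : I.Feasible S) (p : Fin I.n) :
    ∀ j, j < I.len p → I.rel p ≤ S p j := by
  intro j
  induction j with
  | zero => intro hj; exact hF.1 p 0 hj
  | succ j ih =>
    intro hj
    have h1 := hF.1 p (j + 1) hj
    have h2 := ih (Nat.lt_of_succ_lt hj)
    simp only [PInstance.arr] at h1
    omega

/-- The set of packets whose hop at router `r` is forwarded at time `t`. -/
def Fwd (I : PInstance k) (S : PInstance.Sched I) (r t : ℕ) : Set (Fin I.n) :=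
  {p | ∃ j, j < I.len p ∧ I.start p + j = r ∧ S p j = t}

lemma fwd_subsingleton {S : PInstance.Sched I} (hF : I.Feasible S) (r t : ℕ) :
    (Fwd I S r t).Subsingleton := by
  rintro p ⟨j, hj, hjr, hjt⟩ q ⟨j', hj', hjr', hjt'⟩
  exact hF.2 p q j j' hj hj' (by omega) (by omega)

lemma fwd_subset_pend {S : PInstance.Sched I} (hF : I.Feasible S) (r t : ℕ) :
    Fwd I S r t ⊆ Pend I S r t := by
  rintro p ⟨j, hj, hjr, hjt⟩
  have := rel_le_sched hF p j hj
  exact ⟨by omega, j, hj, hjr, by omega⟩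

/-- One-step evolution of the pending set. -/
lemma pend_step {S : PInstance.Sched I} (hF : I.Feasible S) (r t : ℕ) :
    Pend I S r (t + 1) =
      (Pend I S r t \ Fwd I S r t) ∪
        {p | I.rel p = t + 1 ∧ ∃ j, j < I.len p ∧ I.start p + j = r} := by
  ext p
  constructor
  · rintro ⟨hrel, j, hj, hjr, hjt⟩
    rcases Nat.lt_or_ge (I.rel p) (t + 1) with h | h
    · left
      refine ⟨⟨by omega, j, hj, hjr, by omega⟩, ?_⟩
      rintro ⟨j', hj', hjr', hjt'⟩
      have hjj : j = j' := by omega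
      rw [← hjj] at hjt'
      omega
    · right; exact ⟨by omega, j, hj, hjr⟩
  · rintro (⟨⟨hrel, j, hj, hjr, hjt⟩, hnf⟩ | ⟨hrel, j, hj, hjr⟩)
    · refine ⟨by omega, j, hj, hjr, ?_⟩
      rcases Nat.lt_or_ge t (S p j) with h | h
      · omega
      · exact absurd ⟨j, hj, hjr, by omega⟩ hnf
    · have := rel_le_sched hF p j hj
      exact ⟨by omega, j, hj, hjr, by omega⟩

/-- Card version of the one-step evolution. -/
lemma needs_step {S : PInstance.Sched I} (hF : I.Feasible S) (r t : ℕ) :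
    I.needs S r (t + 1) + (Fwd I S r t).ncard =
      I.needs S r t +
        ({p : Fin I.n | I.rel p = t + 1 ∧ ∃ j, j < I.len p ∧ I.start p + j = r}).ncard := by
  rw [needs_eq_ncard_pend, needs_eq_ncard_pend, pend_step hF r t]
  rw [Set.ncard_union_eq ?_ (Set.toFinite _) (Set.toFinite _)]
  · have hsub := fwd_subset_pend hF r t
    have hdiff := Set.ncard_diff hsub (Set.toFinite _)
    have hle := Set.ncard_le_ncard hsub (Set.toFinite _)
    omega
  · rw [Set.disjoint_left]
    rintro p ⟨⟨hrel, -⟩, -⟩ ⟨hrel', -⟩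
    omega

lemma ncard_le_one_of_subsingleton {α : Type*} {s : Set α} (h : s.Subsingleton) :
    s.ncard ≤ 1 := by
  rcases h.eq_empty_or_singleton with h' | ⟨a, h'⟩ <;> simp [h']

end Aux

/-- Let `i ≥ 2` be a router and `t ≥ 0` a time, for an instance all of
whose packets have length `1` or `2` (with a zealous optimal schedule `So` and a Greedy
schedule `Sg`).  If `Δ_i(t+1) = Δ_i(t) + 1 > Δ_{i−1}(t) ≥ 0`, then at time `t` there exist
at least `Δ_i(t+1) − Δ_{i−1}(t)` packets `p` that still need to be forwarded by router
`i − 1` under the schedule `So` of `Opt` and whose current priority satisfies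
`π(p,t) ≥ Δ_i(t+1) + 1`. -/
theorem opt_pending_high_priority {k : ℕ} (I : PInstance k) (hV : I.Valid) (hS : I.Short)
    (So : PInstance.Sched I) (hOf : I.Feasible So) (hOz : I.Zealous So)
    (hOopt : I.cost So = I.opt)
    (Sg : PInstance.Sched I) (hG : I.IsGreedy Sg) (i t : ℕ) (hi : 2 ≤ i)
    (h1 : delta I Sg So i (t + 1) = delta I Sg So i t + 1)
    (h2 : delta I Sg So (i - 1) t < delta I Sg So i (t + 1))
    (h3 : 0 ≤ delta I Sg So (i - 1) t) :
    delta I Sg So i (t + 1) - delta I Sg So (i - 1) t ≤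
      (Set.ncard {p : Fin I.n | I.rel p ≤ t ∧
        (∃ j, j < I.len p ∧ I.start p + j = i - 1 ∧ t ≤ So p j) ∧
        delta I Sg So i (t + 1) + 1 ≤ (I.prio So p t : ℤ)} : ℤ) := by
  classical
  obtain ⟨hGf, hGmax⟩ := hG
  -- Step 1: analyze the one-step change of `delta` at router `i`.
  have hstepG := needs_step hGf i t
  have hstepO := needs_step hOf i t
  have hfGle : (Fwd I Sg i t).ncard ≤ 1 := ncard_le_one_of_subsingleton (fwd_subsingleton hGf i t)
  have hfOle : (Fwd I So i t).ncard ≤ 1 := ncard_le_one_of_subsingleton (fwd_subsingleton hOf i t)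
  have hdit : delta I Sg So i t = (I.needs Sg i t : ℤ) - I.needs So i t := rfl
  have hdit1 : delta I Sg So i (t + 1) = (I.needs Sg i (t + 1) : ℤ) - I.needs So i (t + 1) := rfl
  have hdim : delta I Sg So (i - 1) t = (I.needs Sg (i - 1) t : ℤ) - I.needs So (i - 1) t := rfl
  have hfO : (Fwd I So i t).ncard = 1 := by omega
  have hfG : (Fwd I Sg i t).ncard = 0 := by omega
  have hFwdG : Fwd I Sg i t = ∅ := (Set.ncard_eq_zero (Set.toFinite _)).1 hfG
  obtain ⟨qs, hqs⟩ := Set.ncard_eq_one.1 hfO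
  have hqsF : qs ∈ Fwd I So i t := by rw [hqs]; rfl
  -- no packet is waiting at router i at time t under Greedy
  have hnowait : ∀ p j, PInstance.Waiting I Sg p j t → I.start p + j ≠ i := by
    intro p j hw hij
    obtain ⟨q', j', hw', hq'i, hq't, -⟩ := hGmax t i ⟨p, j, hw, hij⟩
    have : q' ∈ Fwd I Sg i t := ⟨j', hw'.1, hq'i, hq't⟩
    rw [hFwdG] at this
    exact this
  -- structure of Greedy's pending packets at router i
  have hG2struct : ∀ p ∈ Pend I Sg i t,
      I.len p = 2 ∧ I.start p = i - 1 ∧ t ≤ Sg p 0 ∧ t + 1 ≤ Sg p 1 := by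
    rintro p ⟨hrel, j, hj, hji, hts⟩
    have hlen := hS p
    have hstart := (hV p).1
    have hj0 : j ≠ 0 := by
      intro h0
      subst h0
      exact hnowait p 0 ⟨hj, by simpa [PInstance.arr] using hrel, hts⟩ hji
    have hj1 : j = 1 := by omega
    subst hj1
    have hlen2 : I.len p = 2 := by omega
    have hSg0 : t ≤ Sg p 0 := by
      by_contra hh
      push_neg at hh
      exact hnowait p 1 ⟨hj, by simp only [PInstance.arr]; omega, hts⟩ hji
    have harr := hGf.1 p 1 hj
    simp only [PInstance.arr] at harr
    exact ⟨hlen2, by omega, hSg0, by omega⟩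
  have hG2X : Pend I Sg i t ⊆ Pend I Sg (i - 1) t := by
    intro p hp
    obtain ⟨hlen2, hstart, hSg0, -⟩ := hG2struct p hp
    exact ⟨hp.1, 0, by omega, by omega, hSg0⟩
  have hgea : I.needs So i t ≤ I.needs Sg i t := by omega
  set Dn : ℕ := I.needs Sg i t - I.needs So i t + 1 with hDndef
  have hd2 : delta I Sg So i (t + 1) = (Dn : ℤ) := by
    rw [hdit1]; rw [hdit] at h1; push_cast [hDndef]; omega
  have hqsAi : qs ∈ Pend I So i t := fwd_subset_pend hOf i t hqsF
  have hai1 : 1 ≤ I.needs So i t := by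
    rw [needs_eq_ncard_pend]
    exact (Set.ncard_pos (Set.toFinite _)).2 ⟨qs, hqsAi⟩
  -- existence of an old pending packet when Dn ≥ 2
  have hqold : 2 ≤ Dn → ∃ q ∈ Pend I Sg i t, I.rel q + Dn ≤ t := by
    intro hDn2
    by_contra hno
    push_neg at hno
    have hEcard : I.needs Sg i t ≤ (Pend I Sg i t \ Pend I So i t).ncard + I.needs So i t := by
      rw [needs_eq_ncard_pend, needs_eq_ncard_pend]
      calc (Pend I Sg i t).ncard
          ≤ ((Pend I Sg i t \ Pend I So i t) ∪ Pend I So i t).ncard := by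
            refine Set.ncard_le_ncard (fun p hp => ?_) (Set.toFinite _)
            by_cases h : p ∈ Pend I So i t
            · exact Or.inr h
            · exact Or.inl ⟨hp, h⟩
        _ ≤ _ := Set.ncard_union_le _ _
    have hmaps : ∀ q ∈ Pend I Sg i t \ Pend I So i t,
        So q 1 ∈ (Finset.Ico (t + 2 - Dn) t : Set ℕ) := by
      rintro q ⟨hqG, hqA⟩
      obtain ⟨hlen2, hstart, -, -⟩ := hG2struct q hqG
      have hlt : So q 1 < t := by
        by_contra hh
        push_neg at hh
        exact hqA ⟨hqG.1, 1, by omega, by omega, hh⟩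
      have harr := hOf.1 q 1 (by omega)
      simp only [PInstance.arr] at harr
      have hrel0 := rel_le_sched hOf q 0 (by omega)
      have hq := hno q hqG
      simp only [Finset.coe_Ico, Set.mem_Ico]
      omega

    have hinj : Set.InjOn (fun q => So q 1) (Pend I Sg i t \ Pend I So i t) := by
      rintro q hq q' hq' h
      obtain ⟨hl, hs, -, -⟩ := hG2struct q hq.1
      obtain ⟨hl', hs', -, -⟩ := hG2struct q' hq'.1
      exact hOf.2 q q' 1 1 (by omega) (by omega) (by omega) h
    have hcard := Set.ncard_le_ncard_of_injOn (fun q => So q 1) hmaps hinj (Set.toFinite _)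
    rw [Set.ncard_coe_finset, Nat.card_Ico] at hcard
    omega
  -- fresh packets pending under Opt at router i-1 are also pending under Greedy there
  have hfreshX : ∀ p, p ∈ Pend I So (i - 1) t → I.prio So p t ≤ Dn →
      p ∈ Pend I Sg (i - 1) t := by
    intro p hpY hprio
    obtain ⟨hrel, j, hj, hji, hts⟩ := hpY
    have hrem1 : 1 ≤ I.remLen So p t := by
      have hfin : ({j' : ℕ | j' < I.len p ∧ t ≤ So p j'}).Finite :=
        (Set.finite_Iio (I.len p)).subset (fun x hx => hx.1)
      have : 0 < ({j' : ℕ | j' < I.len p ∧ t ≤ So p j'}).ncard :=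
        (Set.ncard_pos hfin).2 ⟨j, hj, hts⟩
      exact this
    have hpr : t - I.rel p + I.remLen So p t ≤ Dn := hprio
    have hrelp : t + 1 ≤ I.rel p + Dn := by omega
    by_contra hpX
    have hSgpj : Sg p j < t := by
      by_contra hh
      push_neg at hh
      exact hpX ⟨hrel, j, hj, hji, hh⟩
    have hrelτ := rel_le_sched hGf p j hj
    rcases Nat.lt_or_ge Dn 2 with hD1 | hD2
    · omega
    · obtain ⟨q, hqG2, hqrel⟩ := hqold hD2
      obtain ⟨hlq, hsq, hq0, hq1⟩ := hG2struct q hqG2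
      have hwq : PInstance.Waiting I Sg q 0 (Sg p j) :=
        ⟨by omega, by simp only [PInstance.arr]; omega, by omega⟩
      have hwp : PInstance.Waiting I Sg p j (Sg p j) :=
        ⟨hj, hGf.1 p j hj, le_refl _⟩
      obtain ⟨q', j', hwq', hq'i, hq't, hmax⟩ := hGmax (Sg p j) (i - 1) ⟨q, 0, hwq, by omega⟩
      have hq'p : p = q' := hGf.2 p q' j j' hj hwq'.1 (by omega) (by omega)
      have hple := hmax q 0 hwq (by omega)
      rw [← hq'p] at hple
      have hremq : I.remLen Sg q (Sg p j) = 2 := by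
        have hset : {j'' : ℕ | j'' < I.len q ∧ Sg p j ≤ Sg q j''} = {0, 1} := by
          ext j''
          simp only [Set.mem_setOf_eq, Set.mem_insert_iff, Set.mem_singleton_iff]
          constructor
          · rintro ⟨h1', h2'⟩; omega
          · rintro (rfl | rfl)
            · exact ⟨by omega, by omega⟩
            · exact ⟨by omega, by omega⟩
        rw [PInstance.remLen, hset, Set.ncard_pair (by norm_num)]
      have hremp : I.remLen Sg p (Sg p j) ≤ 2 := by
        have hsub : {j'' : ℕ | j'' < I.len p ∧ Sg p j ≤ Sg p j''} ⊆
            ↑(Finset.range (I.len p)) := by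
          intro j'' hj''
          simpa [Finset.mem_range] using hj''.1
        have hlenp := hS p
        calc I.remLen Sg p (Sg p j) ≤ (Finset.range (I.len p)).card := by
              rw [← Set.ncard_coe_finset]
              exact Set.ncard_le_ncard hsub (Set.toFinite _)
          _ ≤ 2 := by rw [Finset.card_range]; omega
      have h1q : I.prio Sg q (Sg p j) = (Sg p j - I.rel q) + 2 := by
        rw [PInstance.prio, hremq]
      have h2p : I.prio Sg p (Sg p j) = (Sg p j - I.rel p) + I.remLen Sg p (Sg p j) := rfl
      rw [h1q, h2p] at hple
      omega
  -- Greedy-pending-at-i packets that Opt still needs at i-1 must be in Ai \ {qs}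
  have hG2Y : ∀ p, p ∈ Pend I Sg i t → p ∈ Pend I So (i - 1) t →
      p ∈ Pend I So i t \ {qs} := by
    intro p hpG hpY
    obtain ⟨hlen2, hstart, -, -⟩ := hG2struct p hpG
    obtain ⟨hrel, j, hj, hji, hts⟩ := hpY
    have hj0 : j = 0 := by omega
    subst hj0
    have harr := hOf.1 p 1 (by omega)
    simp only [PInstance.arr] at harr
    refine ⟨⟨hrel, 1, by omega, by omega, by omega⟩, ?_⟩
    intro hpqs
    simp only [Set.mem_singleton_iff] at hpqs
    obtain ⟨js, hjs, hjsi, hjst⟩ := hqsF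
    rw [← hpqs] at hjsi hjst hjs
    have hjs1 : js = 1 := by omega
    rw [hjs1] at hjst
    omega
  -- final counting
  rw [hd2, hdim]
  rw [hd2] at h2
  set Yh : Set (Fin I.n) := {p : Fin I.n | I.rel p ≤ t ∧
      (∃ j, j < I.len p ∧ I.start p + j = i - 1 ∧ t ≤ So p j) ∧
      (Dn : ℤ) + 1 ≤ (I.prio So p t : ℤ)} with hYhdef
  have hYhsub : Yh ⊆ Pend I So (i - 1) t := fun p hp => ⟨hp.1, hp.2.1⟩
  have hyh_le : Yh.ncard ≤ (Pend I So (i - 1) t).ncard :=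
    Set.ncard_le_ncard hYhsub (Set.toFinite _)
  have hdiff : (Pend I So (i - 1) t \ Yh).ncard =
      (Pend I So (i - 1) t).ncard - Yh.ncard := Set.ncard_diff hYhsub (Set.toFinite _)
  have hfresh' : ∀ p ∈ Pend I So (i - 1) t \ Yh, I.prio So p t ≤ Dn := by
    rintro p ⟨hpY, hpYh⟩
    by_contra hh
    push_neg at hh
    exact hpYh ⟨hpY.1, hpY.2, by exact_mod_cast Nat.succ_le_of_lt hh⟩
  have hUX : Pend I Sg i t ∪ (Pend I So (i - 1) t \ Yh) ⊆ Pend I Sg (i - 1) t := by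
    rintro p (hp | ⟨hpY, hpYh⟩)
    · exact hG2X hp
    · exact hfreshX p hpY (hfresh' p ⟨hpY, hpYh⟩)
  have hxle := Set.ncard_le_ncard hUX (Set.toFinite _)
  have hkey := Set.ncard_union_add_ncard_inter (Pend I Sg i t)
    (Pend I So (i - 1) t \ Yh) (Set.toFinite _) (Set.toFinite _)
  have hint : (Pend I Sg i t ∩ (Pend I So (i - 1) t \ Yh)).ncard ≤
      (Pend I So i t).ncard - 1 := by
    have hsub : Pend I Sg i t ∩ (Pend I So (i - 1) t \ Yh) ⊆ Pend I So i t \ {qs} := by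
      rintro p ⟨hpG, hpY, -⟩
      exact hG2Y p hpG hpY
    calc (Pend I Sg i t ∩ (Pend I So (i - 1) t \ Yh)).ncard
        ≤ (Pend I So i t \ {qs}).ncard := Set.ncard_le_ncard hsub (Set.toFinite _)
      _ = (Pend I So i t).ncard - 1 :=
          Set.ncard_diff_singleton_of_mem hqsAi
  have hgix : I.needs Sg (i - 1) t = (Pend I Sg (i - 1) t).ncard := rfl
  have hgiy : I.needs So (i - 1) t = (Pend I So (i - 1) t).ncard := rfl
  have hgii : I.needs Sg i t = (Pend I Sg i t).ncard := rfl
  have haii : I.needs So i t = (Pend I So i t).ncard := rfl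
  rw [hgix, hgiy]
  push_cast
  omega
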